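/- For n > 1, the wreath product S_n ≀ H (two or more switches behaving like the symmetric group S_n, with faithful H-action) does not have a surjective strategy whenever |H| is not a power of 2. -/

import Mathlib

/-- One step of multiplication in the wreath product `G ≀ H` (base `Ω → G`,
with `H` acting on `Ω`): `(k,h)·(k',h') = (k·(h·k'), hh')`. -/
def wmul {G H Ω : Type*} [Group G] [Group H] [MulAction H Ω]
    (a b : (Ω → G) × H) : (Ω → G) × H :=
  (a.1 * fun ω => b.1 (a.2⁻¹ • ω), a.2 * b.2)

/-- `ks` is a surjective strategy for `G ≀ H`: for every adversarial sequence
`hs` of the same length, the projections to the base `K = Ω → G` of the partial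
products `id, (k₁,h₁), (k₁,h₁)(k₂,h₂), …` cover all of `K`. -/
def IsSurjStrat (G : Type*) [Group G] (H : Type*) [Group H] (Ω : Type*) [MulAction H Ω]
    (ks : List (Ω → G)) : Prop :=
  ∀ hs : List H, hs.length = ks.length →
    ∀ k : Ω → G, k ∈ (((ks.zip hs).scanl wmul 1).map Prod.fst)

/-- The puzzle `G ≀ H` (switches `G` at positions `Ω`, spun by `H`) has a
surjective strategy. -/
def HasSurjStrat (G : Type*) [Group G] (H : Type*) [Group H] (Ω : Type*) [MulAction H Ω] : Prop :=
  ∃ ks : List (Ω → G), IsSurjStrat G H Ω ks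

/-! ### Auxiliary theory: the dodging game over `F₂^(ZMod p)` -/

namespace Stmt10

section Aux

variable {p : ℕ} [Fact p.Prime]

/-- discrete difference operator on `F₂^(ZMod p)` -/
def Dop (u : ZMod p → ZMod 2) : ZMod p → ZMod 2 := fun j => u (j + 1) + u j

/-- cyclic shift by `t` -/
def sh (t : ZMod p) (u : ZMod p → ZMod 2) : ZMod p → ZMod 2 := fun j => u (j - t)

lemma Dop_add (u v : ZMod p → ZMod 2) : Dop (u + v) = Dop u + Dop v := by
  funext j; simp [Dop]; ring

lemma Dop_sh (t : ZMod p) (u : ZMod p → ZMod 2) : Dop (sh t u) = sh t (Dop u) := by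
  funext j; simp [Dop, sh, sub_add_eq_add_sub]

lemma sh_zero (u : ZMod p → ZMod 2) : sh 0 u = u := by funext j; simp [sh]

lemma Dop_zero : Dop (0 : ZMod p → ZMod 2) = 0 := by funext j; simp [Dop]

lemma sum_Dop (u : ZMod p → ZMod 2) : ∑ j, Dop u j = 0 := by
  have h1 : ∑ j : ZMod p, u (j + 1) = ∑ j : ZMod p, u j :=
    Fintype.sum_equiv (Equiv.addRight (1 : ZMod p)) _ _ (fun j => rfl)
  simp [Dop, Finset.sum_add_distrib, h1, CharTwo.add_self_eq_zero]

lemma sh_one_ne (hodd : Odd p) (d : ZMod p → ZMod 2) (hd : d ≠ 0)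
    (hsum : ∑ j, d j = 0) : sh 1 d ≠ d := by
  intro hfix
  apply hd
  have hconst : ∀ j : ZMod p, d j = d 0 := by
    have step : ∀ m : ℕ, d (m : ZMod p) = d 0 := by
      intro m
      induction m with
      | zero => simp
      | succ m ih =>
        have h := congrFun hfix ((m : ZMod p) + 1)
        simp only [sh, add_sub_cancel_right] at h
        rw [Nat.cast_succ, ← h, ih]
    intro j
    obtain ⟨m, rfl⟩ := ZMod.natCast_zmod_surjective (n := p) j
    exact step m
  have hsum2 : ∑ j : ZMod p, d j = (p : ℕ) • d 0 := by
    rw [Finset.sum_congr rfl (fun j _ => hconst j)]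
    simp [ZMod.card]
  rw [hsum] at hsum2
  have hp2 : ((p : ℕ) : ZMod 2) = 1 := by
    have h := Nat.odd_iff.mp hodd
    conv_lhs => rw [← Nat.mod_add_div p 2, h]
    push_cast
    have h2 : (2 : ZMod 2) = 0 := rfl
    rw [h2]; ring
  have h0 : d 0 = 0 := by
    have := hsum2.symm
    rwa [nsmul_eq_mul, hp2, one_mul] at this
  funext j; rw [hconst j, h0]; rfl

lemma dodge (hodd : Odd p) (w s u : ZMod p → ZMod 2) (hs : Dop s ≠ w) :
    ∃ t : ZMod p, Dop (s + sh t u) ≠ w := by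
  by_cases hu : Dop u = 0
  · exact ⟨0, by rwa [sh_zero, Dop_add, hu, add_zero]⟩
  · by_cases h0 : Dop s + Dop u = w
    · refine ⟨1, ?_⟩
      rw [Dop_add, Dop_sh]
      intro h1
      have : sh 1 (Dop u) = Dop u := add_left_cancel (h1.trans h0.symm)
      exact sh_one_ne hodd (Dop u) hu (sum_Dop u) this
    · exact ⟨0, by rwa [sh_zero, Dop_add]⟩

end Aux

/-! ### Parity along an orbit -/

/-- parity of a permutation, valued in `ZMod 2` -/
def eps {n : ℕ} (g : Equiv.Perm (Fin n)) : ZMod 2 :=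
  if Equiv.Perm.sign g = 1 then 0 else 1

lemma eps_one {n : ℕ} : eps (1 : Equiv.Perm (Fin n)) = 0 := by simp [eps]

lemma eps_mul {n : ℕ} (g h : Equiv.Perm (Fin n)) : eps (g * h) = eps g + eps h := by
  unfold eps
  rw [map_mul]
  rcases Int.units_eq_one_or (Equiv.Perm.sign g) with hg | hg <;>
    rcases Int.units_eq_one_or (Equiv.Perm.sign h) with hh | hh <;>
      simp [hg, hh] <;> decide

lemma eps_swap {n : ℕ} {i j : Fin n} (hij : i ≠ j) : eps (Equiv.swap i j) = 1 := by
  simp [eps, Equiv.Perm.sign_swap hij]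

section Grp

variable {H Ω : Type*} [Group H] [MulAction H Ω] {p : ℕ} [Fact p.Prime]

/-- labelled orbit of `ω₀` under `h₀` -/
def orb (h₀ : H) (ω₀ : Ω) (j : ZMod p) : Ω := h₀ ^ j.val • ω₀

lemma pow_smul_orb (h₀ : H) (ω₀ : Ω) (horder : orderOf h₀ = p) (m : ℕ) (j : ZMod p) :
    h₀ ^ m • orb h₀ ω₀ j = orb h₀ ω₀ ((m : ZMod p) + j) := by
  unfold orb
  rw [smul_smul, ← pow_add]
  congr 1
  rw [pow_eq_pow_iff_modEq, horder, ZMod.val_add, ZMod.val_natCast]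
  exact ((Nat.mod_modEq _ p).trans ((Nat.mod_modEq m p).add_right _)).symm

lemma inv_pow_smul_orb (h₀ : H) (ω₀ : Ω) (horder : orderOf h₀ = p) (a : ℕ) (j : ZMod p) :
    (h₀ ^ a)⁻¹ • orb h₀ ω₀ j = orb h₀ ω₀ (j - (a : ZMod p)) := by
  have h := pow_smul_orb h₀ ω₀ horder a (j - (a : ZMod p))
  rw [add_sub_cancel] at h
  rw [← h, inv_smul_smul]

lemma pow_fix {g : H} {ω : Ω} (hfix : g • ω = ω) (t : ℕ) : g ^ t • ω = ω := by
  induction t with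
  | zero => simp
  | succ t ih => rw [pow_succ, mul_smul, hfix, ih]

lemma fix_pow_iff (h₀ : H) (ω₀ : Ω) (horder : orderOf h₀ = p)
    (hmove : h₀ • ω₀ ≠ ω₀) (m : ℕ) : h₀ ^ m • ω₀ = ω₀ ↔ p ∣ m := by
  constructor
  · intro hfix
    by_contra hnd
    have hm0 : (m : ZMod p) ≠ 0 := by
      rwa [Ne, ZMod.natCast_eq_zero_iff]
    set k : ℕ := ((m : ZMod p)⁻¹).val with hk
    have hmk : m * k ≡ 1 [MOD p] := by
      rw [← ZMod.natCast_eq_natCast_iff]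
      push_cast
      rw [hk, ZMod.natCast_rightInverse _, mul_inv_cancel₀ hm0]
    have h1 : h₀ ^ (m * k) = h₀ ^ 1 := by
      rw [pow_eq_pow_iff_modEq, horder]; exact hmk
    have h2 : h₀ ^ (m * k) • ω₀ = ω₀ := by
      rw [pow_mul]; exact pow_fix hfix k
    rw [h1, pow_one] at h2
    exact hmove h2
  · rintro ⟨t, rfl⟩
    rw [pow_mul]
    have h : h₀ ^ p = 1 := by rw [← horder]; exact pow_orderOf_eq_one h₀
    rw [h, one_pow, one_smul]

lemma orb_eq_zero_iff (h₀ : H) (ω₀ : Ω) (horder : orderOf h₀ = p)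
    (hmove : h₀ • ω₀ ≠ ω₀) (j : ZMod p) : orb h₀ ω₀ j = ω₀ ↔ j = 0 := by
  unfold orb
  rw [fix_pow_iff h₀ ω₀ horder hmove]
  constructor
  · intro hdvd
    have hlt := ZMod.val_lt j
    rcases Nat.eq_zero_or_pos j.val with h | h
    · exact (ZMod.val_eq_zero j).mp h
    · exact absurd (Nat.le_of_dvd h hdvd) (by omega)
  · rintro rfl
    simp [ZMod.val_zero]

lemma orb_inj (h₀ : H) (ω₀ : Ω) (horder : orderOf h₀ = p)
    (hmove : h₀ • ω₀ ≠ ω₀) : Function.Injective (orb (p := p) h₀ ω₀) := by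
  have key : ∀ j j' : ZMod p, j.val ≤ j'.val → orb h₀ ω₀ j = orb h₀ ω₀ j' → j = j' := by
    intro j j' hle heq
    unfold orb at heq
    have hdecomp : j'.val = j.val + (j'.val - j.val) := by omega
    rw [hdecomp, pow_add, mul_smul] at heq
    have hfix : h₀ ^ (j'.val - j.val) • ω₀ = ω₀ :=
      MulAction.injective (h₀ ^ j.val) heq.symm
    have hdvd := (fix_pow_iff h₀ ω₀ horder hmove _).mp hfix
    have hlt : j'.val - j.val < p := lt_of_le_of_lt (Nat.sub_le _ _) (ZMod.val_lt j')
    have hz : j'.val - j.val = 0 := by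
      rcases Nat.eq_zero_or_pos (j'.val - j.val) with h | h
      · exact h
      · exact absurd (Nat.le_of_dvd h hdvd) (by omega)
    exact ZMod.val_injective p (by omega)
  intro j j' heq
  rcases le_total j.val j'.val with h | h
  · exact key j j' h heq
  · exact (key j' j h heq.symm).symm

/-- parity pattern of a base element along the labelled orbit -/
def rmap (h₀ : H) (ω₀ : Ω) {n : ℕ} (k : Ω → Equiv.Perm (Fin n)) : ZMod p → ZMod 2 :=
  fun j => eps (k (orb h₀ ω₀ j))

omit [Fact p.Prime] in
lemma rmap_one (h₀ : H) (ω₀ : Ω) {n : ℕ} :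
    rmap (p := p) h₀ ω₀ (1 : Ω → Equiv.Perm (Fin n)) = 0 := by
  funext j; simp [rmap, eps_one]

lemma rmap_wmul (h₀ : H) (ω₀ : Ω) (horder : orderOf h₀ = p) {n : ℕ}
    (b : (Ω → Equiv.Perm (Fin n)) × H) (a : ℕ) (hb : b.2 = h₀ ^ a)
    (k : Ω → Equiv.Perm (Fin n)) (h : H) :
    rmap (p := p) h₀ ω₀ ((wmul b (k, h)).1)
      = rmap h₀ ω₀ b.1 + sh (a : ZMod p) (rmap h₀ ω₀ k) := by
  funext j
  show eps (b.1 (orb h₀ ω₀ j) * k (b.2⁻¹ • orb h₀ ω₀ j)) = _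
  rw [eps_mul, hb, inv_pow_smul_orb h₀ ω₀ horder]
  rfl

/-! ### The adversary recursion -/

lemma rec_main (hodd : Odd p) (h₀ : H) (ω₀ : Ω) (horder : orderOf h₀ = p) {n : ℕ}
    (w : ZMod p → ZMod 2) :
    ∀ (ks : List (Ω → Equiv.Perm (Fin n))) (b : (Ω → Equiv.Perm (Fin n)) × H) (a : ℕ),
      b.2 = h₀ ^ a →
      Dop (rmap h₀ ω₀ b.1) ≠ w →
      (∀ k rest, ks = k :: rest →
        Dop (rmap h₀ ω₀ b.1 + sh (a : ZMod p) (rmap h₀ ω₀ k)) ≠ w) →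
      ∃ hs : List H, hs.length = ks.length ∧
        ∀ q ∈ (ks.zip hs).scanl wmul b, Dop (rmap (p := p) h₀ ω₀ q.1) ≠ w := by
  intro ks
  induction ks with
  | nil =>
    intro b a hb hinv _
    refine ⟨[], rfl, ?_⟩
    intro q hq
    simp only [List.zip_nil_right, List.scanl_nil, List.mem_singleton] at hq
    rwa [hq]
  | cons k rest ih =>
    intro b a hb hinv hnext
    have hs' : Dop (rmap h₀ ω₀ b.1 + sh (a : ZMod p) (rmap h₀ ω₀ k)) ≠ w :=
      hnext k rest rfl
    obtain ⟨t, ht⟩ : ∃ t : ZMod p, ∀ k₂ rest', rest = k₂ :: rest' →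
        Dop ((rmap h₀ ω₀ b.1 + sh (a : ZMod p) (rmap h₀ ω₀ k))
          + sh t (rmap h₀ ω₀ k₂)) ≠ w := by
      cases rest with
      | nil => exact ⟨0, fun k₂ rest' h => by cases h⟩
      | cons k₂ rest' =>
        obtain ⟨t, ht⟩ := dodge hodd w _ (rmap h₀ ω₀ k₂) hs'
        exact ⟨t, fun k₂' rest'' h => by cases h; exact ht⟩
    set e : ℕ := (t - (a : ZMod p)).val with he
    set b' := wmul b (k, h₀ ^ e) with hb'def
    have hb' : b'.2 = h₀ ^ (a + e) := by
      simp only [hb'def, wmul, hb, pow_add]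
    have hr' : rmap (p := p) h₀ ω₀ b'.1
        = rmap h₀ ω₀ b.1 + sh (a : ZMod p) (rmap h₀ ω₀ k) :=
      rmap_wmul h₀ ω₀ horder b a hb k _
    have hcast : ((a + e : ℕ) : ZMod p) = t := by
      push_cast [he]
      rw [ZMod.natCast_rightInverse _]
      ring
    obtain ⟨hs, hlen, hmem⟩ := ih b' (a + e) hb'
      (by rw [hr']; exact hs')
      (by intro k₂ rest' heq; rw [hr', hcast]; exact ht k₂ rest' heq)
    refine ⟨h₀ ^ e :: hs, by simp [hlen], ?_⟩
    intro q hq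
    rw [List.zip_cons_cons, List.scanl_cons] at hq
    rcases List.mem_cons.mp hq with rfl | hq'
    · exact hinv
    · exact hmem q hq'

end Grp

/-! ### Extracting an odd prime -/

lemma exists_odd_prime_dvd {N : ℕ} (h0 : N ≠ 0) (h : ¬ ∃ m : ℕ, N = 2 ^ m) :
    ∃ p : ℕ, p.Prime ∧ Odd p ∧ p ∣ N := by
  by_contra hc
  push_neg at hc
  apply h
  have huniq : ∀ {d : ℕ}, d.Prime → d ∣ N → d = 2 := by
    intro d hd hdvd
    by_contra hne
    exact hc d hd (hd.odd_of_ne_two hne) hdvd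
  exact ⟨_, Nat.eq_prime_pow_of_unique_prime_dvd h0 huniq⟩

end Stmt10

/-- for n > 1, Sₙ ≀ H (H acting faithfully on Ω) has no surjective
strategy whenever |H| is not a power of 2. -/
theorem stmt10 {H Ω : Type*} [Group H] [Finite H] [MulAction H Ω]
    [Fintype Ω] [FaithfulSMul H Ω]
    (n : ℕ) (hn : 1 < n)
    (hH : ¬ ∃ m : ℕ, Nat.card H = 2 ^ m) :
    ¬ HasSurjStrat (Equiv.Perm (Fin n)) H Ω := by
  classical
  open Stmt10 in
  rintro ⟨ks, hstrat⟩
  -- find an odd prime dividing |H| and an element of that order, moving some ω₀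
  have hN0 : Nat.card H ≠ 0 := Nat.card_pos.ne'
  obtain ⟨p, hp, hodd, hdvd⟩ := Stmt10.exists_odd_prime_dvd hN0 hH
  haveI : Fact p.Prime := ⟨hp⟩
  obtain ⟨h₀, horder⟩ := exists_prime_orderOf_dvd_card' p hdvd
  have hne1 : h₀ ≠ 1 := by
    intro h
    rw [h, orderOf_one] at horder
    exact hp.one_lt.ne horder
  obtain ⟨ω₀, hmove⟩ : ∃ ω₀ : Ω, h₀ • ω₀ ≠ ω₀ := by
    by_contra hall
    push_neg at hall
    exact hne1 (FaithfulSMul.eq_of_smul_eq_smul (fun ω => by rw [hall ω, one_smul]))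
  haveI : Fact (1 < p) := ⟨hp.one_lt⟩
  -- two transposition-switches
  set i0 : Fin n := ⟨0, by omega⟩
  set i1 : Fin n := ⟨1, by omega⟩
  have hi01 : i0 ≠ i1 := by simp [i0, i1, Fin.ext_iff]
  set tw : Equiv.Perm (Fin n) := Equiv.swap i0 i1 with htw
  have htw1 : tw ≠ 1 := by
    simp only [htw, Ne, Equiv.swap_eq_one_iff]
    exact hi01
  set k₀ : Ω → Equiv.Perm (Fin n) := fun ω => if ω = ω₀ then tw else 1 with hk₀
  set k₀' : Ω → Equiv.Perm (Fin n) := fun ω => if ω = h₀ • ω₀ then tw else 1 with hk₀'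
  -- compute their orbit parity patterns
  have hrk₀ : rmap (p := p) h₀ ω₀ k₀ = fun j => if j = 0 then 1 else 0 := by
    funext j
    simp only [rmap, hk₀]
    rw [Stmt10.orb_eq_zero_iff h₀ ω₀ horder hmove]
    by_cases hj : j = 0 <;> simp [hj, htw, eps_swap hi01, eps_one]
  have horb1 : Stmt10.orb (p := p) h₀ ω₀ 1 = h₀ • ω₀ := by
    unfold Stmt10.orb
    rw [ZMod.val_one, pow_one]
  have hrk₀' : rmap (p := p) h₀ ω₀ k₀' = fun j => if j = 1 then 1 else 0 := by
    funext j
    simp only [rmap, hk₀']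
    rw [← horb1]
    by_cases hj : j = 1
    · simp [hj, htw, eps_swap hi01]
    · have : Stmt10.orb (p := p) h₀ ω₀ j ≠ Stmt10.orb (p := p) h₀ ω₀ 1 := by
        intro h
        exact hj (Stmt10.orb_inj h₀ ω₀ horder hmove h)
      simp [this, hj, eps_one]
  -- basic facts in `ZMod p`
  have h1ne0 : (1 : ZMod p) ≠ 0 := one_ne_zero
  have hpne2 : p ≠ 2 := by
    intro h
    rw [h] at hodd
    exact (Nat.not_odd_iff_even.mpr (by decide)) hodd
  have h2ne0 : (2 : ZMod p) ≠ 0 := by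
    have : ((2 : ℕ) : ZMod p) ≠ 0 := by
      rw [Ne, ZMod.natCast_eq_zero_iff]
      intro hdvd
      rcases (Nat.prime_two.eq_one_or_self_of_dvd p hdvd) with h | h
      · exact hp.ne_one h
      · exact hpne2 h
    simpa using this
  have h2ne1 : (2 : ZMod p) ≠ 1 := by
    intro h
    apply h1ne0
    calc (1 : ZMod p) = 2 - 1 := by ring
      _ = 0 := by rw [h]; ring
  -- key values of the difference operator on the two patterns
  have hDv0 : Dop (rmap (p := p) h₀ ω₀ k₀) ≠ 0 := by
    rw [hrk₀]
    intro h
    have h0 := congrFun h 0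
    simp [Dop, h1ne0] at h0
  have hDv'0 : Dop (rmap (p := p) h₀ ω₀ k₀') ≠ 0 := by
    rw [hrk₀']
    intro h
    have h0 := congrFun h 0
    simp [Dop, h1ne0, Ne.symm h1ne0] at h0
  have hDvv' : Dop (rmap (p := p) h₀ ω₀ k₀) ≠ Dop (rmap (p := p) h₀ ω₀ k₀') := by
    rw [hrk₀, hrk₀']
    intro h
    have h1 := congrFun h 1
    simp [Dop, one_add_one_eq_two, h2ne0, h2ne1, h1ne0] at h1
  -- handle the empty strategy separately
  cases ks with
  | nil =>
    have hmem := hstrat [] rfl k₀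
    simp only [List.zip_nil_right, List.scanl_nil, List.map_cons, List.map_nil,
      List.mem_singleton] at hmem
    have h1 := congrFun hmem ω₀
    simp only [hk₀, if_pos rfl] at h1
    exact htw1 (h1.trans rfl)
  | cons k₁ rest =>
    -- choose the target `w` and its witness switch `kw`
    obtain ⟨w, kw, hw0, hwkw, hwk₁⟩ :
        ∃ (w : ZMod p → ZMod 2) (kw : Ω → Equiv.Perm (Fin n)),
          w ≠ 0 ∧ Dop (rmap (p := p) h₀ ω₀ kw) = w ∧
            Dop (rmap (p := p) h₀ ω₀ k₁) ≠ w := by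
      by_cases hc : Dop (rmap (p := p) h₀ ω₀ k₁) = Dop (rmap (p := p) h₀ ω₀ k₀)
      · exact ⟨_, k₀', hDv'0, rfl, by rw [hc]; exact hDvv'⟩
      · exact ⟨_, k₀, hDv0, rfl, hc⟩
    -- run the adversary
    have hb1 : ((1 : (Ω → Equiv.Perm (Fin n)) × H)).2 = h₀ ^ 0 := by
      simp
    have hfst1 : ((1 : (Ω → Equiv.Perm (Fin n)) × H)).1 = 1 := rfl
    obtain ⟨hs, hlen, hinv⟩ := Stmt10.rec_main hodd h₀ ω₀ horder w (k₁ :: rest)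
      (1 : (Ω → Equiv.Perm (Fin n)) × H) 0 hb1
      (by rw [hfst1, Stmt10.rmap_one, Stmt10.Dop_zero]; exact fun h => hw0 h.symm)
      (by
        intro k rest' heq
        cases heq
        rw [hfst1, Stmt10.rmap_one, Nat.cast_zero, Stmt10.sh_zero, zero_add]
        exact hwk₁)
    have hmem := hstrat hs hlen kw
    obtain ⟨q, hq, hq1⟩ := List.mem_map.mp hmem
    apply hinv q hq
    rw [hq1, hwkw]
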